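/- Let M be a graded D-module with a connection ∇. Under the isomorphism Φ : M → D ⊗_k (M/D_+M) from the previous result, the connection ∇ corresponds to d ⊗ 1, and Φ identifies ker(∇) with M/D_+M; consequently the natural map ker(∇) ⊗_k D → M is an isomorphism of D-modules. -/

import Mathlib

open scoped TensorProduct

theorem stmt4aux (k D : Type*) [CommRing k] [CommRing D] [Algebra k D]
    (B : Module.Basis ℕ k D) (hone : B 0 = 1)
    (d : D →ₗ[k] D)
    (hd : ∀ n : ℕ, d (B n) = if n = 0 then 0 else B (n - 1))
    (M : Type*) [AddCommGroup M] [Module D M] [Module k M] [IsScalarTower k D M]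
    (nabla : M →ₗ[k] M)
    (hnil : ∀ m : M, ∃ N : ℕ, ∀ n ≥ N, (nabla ^ n) m = 0)
    (Q : Type*) [AddCommGroup Q] [Module k Q] (π : M →ₗ[k] Q)
    (Φ : M ≃ₗ[D] (D ⊗[k] Q))
    (hΦ : ∀ (m : M) (N : ℕ), (∀ n ≥ N, (nabla ^ n) m = 0) →
        Φ m = ∑ n ∈ Finset.range N, B n ⊗ₜ[k] (π ((nabla ^ n) m))) :
    (∀ m : M, Φ (nabla m) = (LinearMap.rTensor _ d) (Φ m)) ∧
    (Function.Bijective fun x : LinearMap.ker nabla => π (x : M)) ∧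
    (∃ μ : (D ⊗[k] LinearMap.ker nabla) →ₗ[D] M,
      (∀ (f : D) (x : LinearMap.ker nabla), μ (f ⊗ₜ[k] x) = f • (x : M)) ∧
      Function.Bijective μ) := by
  -- injectivity of q ↦ B 0 ⊗ q
  have hinj : ∀ q q' : Q, (B 0) ⊗ₜ[k] q = (B 0) ⊗ₜ[k] q' → q = q' := by
    intro q q' h
    have := congrArg (fun t => (TensorProduct.lid k Q)
      (LinearMap.rTensor Q (B.coord 0) t)) h
    simpa [LinearMap.rTensor_tmul, TensorProduct.lid_tmul, Module.Basis.coord_apply] using this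
  -- elements of the kernel
  have hker : ∀ x : M, nabla x = 0 → Φ x = (B 0) ⊗ₜ[k] π x := by
    intro x hx
    have h1 : ∀ n ≥ 1, (nabla ^ n) x = 0 := by
      intro n hn
      obtain ⟨m, rfl⟩ := Nat.exists_eq_add_of_le hn
      rw [add_comm, pow_succ, Module.End.mul_apply, hx, map_zero]
    rw [hΦ x 1 h1]
    simp
  -- Part 1
  have part1 : ∀ m : M, Φ (nabla m) = (LinearMap.rTensor Q d) (Φ m) := by
    intro m
    obtain ⟨N, hN⟩ := hnil m
    have hN' : ∀ n ≥ N + 1, (nabla ^ n) m = 0 := fun n hn => hN n (by omega)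
    have hL : ∀ n ≥ N + 1, (nabla ^ n) (nabla m) = 0 := by
      intro n hn
      rw [← Module.End.mul_apply, ← pow_succ, hN' (n + 1) (by omega)]
    rw [hΦ (nabla m) (N + 1) hL, hΦ m (N + 1) hN', map_sum]
    have h2 : ∀ n : ℕ, (nabla ^ n) (nabla m) = (nabla ^ (n + 1)) m := by
      intro n; rw [pow_succ, Module.End.mul_apply]
    rw [Finset.sum_range_succ, h2 N, hN' (N + 1) le_rfl]
    simp only [h2, LinearMap.rTensor_tmul, hd]
    rw [Finset.sum_range_succ' (fun n => (if n = 0 then 0 else B (n - 1)) ⊗ₜ[k]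
      (π ((nabla ^ n) m)))]
    simp
  -- Part 2
  have part2 : Function.Bijective fun x : LinearMap.ker nabla => π (x : M) := by
    constructor
    · intro x y hxy
      have hxy' : π (x : M) = π (y : M) := hxy
      have hx := hker x (x.2 : nabla (x : M) = 0)
      have hy := hker y (y.2 : nabla (y : M) = 0)
      have : Φ (x : M) = Φ (y : M) := by rw [hx, hy, hxy']
      exact Subtype.ext (Φ.injective this)
    · intro q
      have hΦm : Φ (Φ.symm ((B 0) ⊗ₜ[k] q)) = (B 0) ⊗ₜ[k] q := Φ.apply_symm_apply _
      have hnm : nabla (Φ.symm ((B 0) ⊗ₜ[k] q)) = 0 := by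
        have h0 : Φ (nabla (Φ.symm ((B 0) ⊗ₜ[k] q))) = 0 := by
          rw [part1, hΦm]
          simp [LinearMap.rTensor_tmul, hd]
        exact (LinearEquiv.map_eq_zero_iff Φ).mp h0
      refine ⟨⟨_, hnm⟩, ?_⟩
      have := hker _ hnm
      exact (hinj _ _ (by rw [← this, hΦm])).symm
  refine ⟨part1, part2, ?_⟩
  -- Part 3
  have hgb : Function.Bijective (π ∘ₗ (LinearMap.ker nabla).subtype) := part2
  set e := LinearEquiv.ofBijective _ hgb with he
  set E := ((LinearEquiv.baseChange k D _ _ e).trans Φ.symm) with hE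
  refine ⟨E.toLinearMap, ?_, E.bijective⟩
  intro f x
  show E (f ⊗ₜ[k] x) = f • (x : M)
  have h1 : E (f ⊗ₜ[k] x) = Φ.symm (f ⊗ₜ[k] π (x : M)) := rfl
  rw [h1]
  apply Φ.injective
  rw [Φ.apply_symm_apply, map_smul, hker (x : M) (x.2 : nabla (x : M) = 0)]
  rw [TensorProduct.smul_tmul', hone, smul_eq_mul, mul_one]

theorem stmt4 (k D : Type*) [CommRing k] [CommRing D] [Algebra k D]
    (B : Module.Basis ℕ k D) (hone : B 0 = 1)
    (hmul : ∀ n m : ℕ, B n * B m = ((n + m).choose n : k) • B (n + m))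
    (d : D →ₗ[k] D)
    (hd : ∀ n : ℕ, d (B n) = if n = 0 then 0 else B (n - 1))
    (M : Type*) [AddCommGroup M] [Module D M] [Module k M] [IsScalarTower k D M]
    (nabla : M →ₗ[k] M)
    (hconn : ∀ (f : D) (m : M), nabla (f • m) = f • nabla m + d f • m)
    (hnil : ∀ m : M, ∃ N : ℕ, ∀ n ≥ N, (nabla ^ n) m = 0)
    (Φ : M ≃ₗ[D] (D ⊗[k] (M ⧸ Submodule.restrictScalars k
        ((Ideal.span (Set.range fun n : ℕ => B (n + 1))) • (⊤ : Submodule D M)))))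
    (hΦ : ∀ (m : M) (N : ℕ), (∀ n ≥ N, (nabla ^ n) m = 0) →
        Φ m = ∑ n ∈ Finset.range N, B n ⊗ₜ[k]
          (Submodule.mkQ _ ((nabla ^ n) m))) :
    (∀ m : M, Φ (nabla m) = (LinearMap.rTensor _ d) (Φ m)) ∧
    (Function.Bijective fun x : LinearMap.ker nabla =>
      Submodule.mkQ (Submodule.restrictScalars k
        ((Ideal.span (Set.range fun n : ℕ => B (n + 1))) • (⊤ : Submodule D M))) (x : M)) ∧
    (∃ μ : (D ⊗[k] LinearMap.ker nabla) →ₗ[D] M,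
      (∀ (f : D) (x : LinearMap.ker nabla), μ (f ⊗ₜ[k] x) = f • (x : M)) ∧
      Function.Bijective μ) :=
  stmt4aux k D B hone d hd M nabla hnil _ (Submodule.mkQ _) Φ hΦ
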